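/- arXiv:1103.1829 — 7 statements merged into one kernel-verified Lean document; each statement's English description precedes it below -/
import Mathlib

section
/- For a finite set of square matrices 𝓜 = {M₁,…,Mₙ} and any positive integers n and k, ρ_{nk}(𝓜) ≥ ρ_k(𝓜), where ρ_k(𝓜) is the maximum over all products of k matrices from 𝓜 of the k-th root of the spectral radius of the product. Consequently the generalized spectral radius ρ(𝓜) = limsup_k ρ_k(𝓜) equals sup_k ρ_k(𝓜). -/
open Matrix BigOperators Filter

/-- The spectral radius of a real square matrix: supremum of moduli of complex eigenvalues. -/
noncomputable def specRad {d : ℕ} (M : Matrix (Fin d) (Fin d) ℝ) : ℝ :=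
  sSup ((fun z : ℂ => ‖z‖) '' spectrum ℂ (M.map Complex.ofReal))

/-- `rhoK A k` = max over products of `k` matrices from the family `A` of the `k`-th root
of the spectral radius of the product. -/
noncomputable def rhoK {d n : ℕ} (A : Fin n → Matrix (Fin d) (Fin d) ℝ) (k : ℕ) : ℝ :=
  ⨆ f : Fin k → Fin n, specRad ((List.ofFn fun i => A (f i)).prod) ^ ((1 : ℝ) / (k : ℝ))

section Aux

attribute [local instance] Matrix.linftyOpNormedRing Matrix.linftyOpNormedAlgebra

variable {d : ℕ}

lemma aux_spec_nonempty (hd : 0 < d) (M : Matrix (Fin d) (Fin d) ℝ) :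
    (spectrum ℂ (M.map Complex.ofReal)).Nonempty := by
  haveI : Nonempty (Fin d) := ⟨⟨0, hd⟩⟩
  exact spectrum.nonempty_of_isAlgClosed_of_finiteDimensional ℂ _

lemma aux_specRad_mem (hd : 0 < d) (M : Matrix (Fin d) (Fin d) ℝ) :
    specRad M ∈ (fun z : ℂ => ‖z‖) '' spectrum ℂ (M.map Complex.ofReal) :=
  Set.Nonempty.csSup_mem ((aux_spec_nonempty hd M).image _)
    ((Matrix.finite_spectrum _).image _)

lemma aux_specRad_nonneg (hd : 0 < d) (M : Matrix (Fin d) (Fin d) ℝ) :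
    0 ≤ specRad M := by
  obtain ⟨z, _, hz⟩ := aux_specRad_mem hd M
  rw [← hz]; exact norm_nonneg z

lemma aux_specRad_le (hd : 0 < d) {M : Matrix (Fin d) (Fin d) ℝ} {C : ℝ}
    (h : ∀ z ∈ spectrum ℂ (M.map Complex.ofReal), ‖z‖ ≤ C) :
    specRad M ≤ C := by
  apply csSup_le ((aux_spec_nonempty hd M).image _)
  rintro _ ⟨z, hz, rfl⟩; exact h z hz

lemma aux_map_ringHom (M : Matrix (Fin d) (Fin d) ℝ) :
    M.map (Complex.ofReal : ℝ → ℂ) = (Complex.ofRealHom.mapMatrix : _ →+* _) M := rfl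

lemma aux_map_pow (M : Matrix (Fin d) (Fin d) ℝ) (m : ℕ) :
    (M ^ m).map (Complex.ofReal : ℝ → ℂ) = (M.map Complex.ofReal) ^ m := by
  rw [aux_map_ringHom, aux_map_ringHom, map_pow]

lemma aux_specRad_pow (hd : 0 < d) (M : Matrix (Fin d) (Fin d) ℝ) (m : ℕ) :
    specRad (M ^ m) = specRad M ^ m := by
  unfold specRad
  rw [aux_map_pow, spectrum.map_pow_of_nonempty (aux_spec_nonempty hd M) m]
  set S := spectrum ℂ (M.map Complex.ofReal) with hS
  have himg : (fun z : ℂ => ‖z‖) '' ((· ^ m) '' S)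
      = (fun x : ℝ => x ^ m) '' ((fun z : ℂ => ‖z‖) '' S) := by
    rw [Set.image_image, Set.image_image]
    exact Set.image_congr fun z _ => norm_pow z m
  rw [himg]
  set T := (fun z : ℂ => ‖z‖) '' S with hT
  have hTne : T.Nonempty := (aux_spec_nonempty hd M).image _
  have hTfin : T.Finite := (Matrix.finite_spectrum _).image _
  have hTnonneg : ∀ x ∈ T, (0:ℝ) ≤ x := by
    rintro _ ⟨z, _, rfl⟩; exact norm_nonneg z
  apply le_antisymm
  · apply csSup_le (hTne.image _)
    rintro _ ⟨x, hx, rfl⟩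
    exact pow_le_pow_left₀ (hTnonneg x hx) (le_csSup hTfin.bddAbove hx) m
  · have hmem : sSup T ∈ T := hTne.csSup_mem hTfin
    exact le_csSup (hTfin.image _).bddAbove ⟨sSup T, hmem, rfl⟩

lemma aux_norm_spec (hd : 0 < d) (M : Matrix (Fin d) (Fin d) ℂ) :
    ∀ z ∈ spectrum ℂ M, ‖z‖ ≤ ‖M‖ := by
  haveI : Nonempty (Fin d) := ⟨⟨0, hd⟩⟩
  intro z hz
  simpa using spectrum.norm_le_norm_of_mem hz

lemma aux_list_prod_le (L : List ℝ) (C : ℝ) (hC : 0 ≤ C)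
    (h : ∀ x ∈ L, 0 ≤ x ∧ x ≤ C) : L.prod ≤ C ^ L.length := by
  induction L with
  | nil => simp
  | cons a L ih =>
    have ha := h a (List.mem_cons_self)
    have hL : ∀ x ∈ L, 0 ≤ x ∧ x ≤ C := fun x hx => h x (List.mem_cons_of_mem a hx)
    have hLprod : (0:ℝ) ≤ L.prod := List.prod_nonneg fun x hx => (hL x hx).1
    simp only [List.prod_cons, List.length_cons, pow_succ']
    exact mul_le_mul ha.2 (ih hL) hLprod hC

lemma aux_map_list_prod {n : ℕ} (A : Fin n → Matrix (Fin d) (Fin d) ℝ) {k : ℕ}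
    (f : Fin k → Fin n) :
    ((List.ofFn fun i => A (f i)).prod).map (Complex.ofReal : ℝ → ℂ)
      = (List.ofFn fun i => (A (f i)).map Complex.ofReal).prod := by
  rw [aux_map_ringHom, map_list_prod, List.map_ofFn]
  rfl

lemma aux_specRad_prod_le (hd : 0 < d) {n : ℕ} (A : Fin n → Matrix (Fin d) (Fin d) ℝ)
    (C : ℝ) (hC : 0 ≤ C) (hA : ∀ i, ‖(A i).map Complex.ofReal‖ ≤ C)
    {k : ℕ} (f : Fin k → Fin n) :
    specRad ((List.ofFn fun i => A (f i)).prod) ≤ C ^ k := by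
  haveI : Nonempty (Fin d) := ⟨⟨0, hd⟩⟩
  apply aux_specRad_le hd
  intro z hz
  rw [aux_map_list_prod] at hz
  have h1 := aux_norm_spec hd _ z hz
  refine h1.trans ((List.norm_prod_le _).trans ?_)
  have h2 := aux_list_prod_le ((List.ofFn fun i => (A (f i)).map Complex.ofReal).map norm)
    C hC ?_
  · simpa using h2
  · rintro x hx
    simp only [List.mem_map, List.mem_ofFn, Set.mem_range] at hx
    obtain ⟨M, ⟨i, rfl⟩, rfl⟩ := hx
    exact ⟨norm_nonneg _, hA _⟩

/-- the key periodic-extension product identity -/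
lemma aux_prod_repeat {n : ℕ} (A : Fin n → Matrix (Fin d) (Fin d) ℝ) {m k : ℕ} (hk : 0 < k)
    (f : Fin k → Fin n) :
    (List.ofFn fun i : Fin (m * k) => A (f ⟨(i : ℕ) % k, Nat.mod_lt _ hk⟩)).prod
      = ((List.ofFn fun i => A (f i)).prod) ^ m := by
  rw [List.ofFn_mul, List.prod_flatten]
  refine (List.prod_eq_pow_card _ ((List.ofFn fun i => A (f i)).prod) ?_).trans (by simp)
  intro x hx
  simp only [List.mem_map, List.mem_ofFn, Set.mem_range] at hx
  obtain ⟨L, ⟨i, rfl⟩, rfl⟩ := hx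
  congr 1
  apply congrArg List.ofFn
  funext j
  exact congrArg (fun t => A (f t)) (Fin.ext (by
    show ((i : ℕ) * k + (j : ℕ)) % k = (j : ℕ)
    rw [add_comm, Nat.add_mul_mod_self_right]
    exact Nat.mod_eq_of_lt j.2))

lemma aux_exists_bound (hd : 0 < d) {n : ℕ} (hn : 0 < n)
    (A : Fin n → Matrix (Fin d) (Fin d) ℝ) :
    ∃ B : ℝ, 1 ≤ B ∧ ∀ (k : ℕ) (f : Fin k → Fin n),
      specRad ((List.ofFn fun i => A (f i)).prod) ≤ B ^ k := by
  haveI : Nonempty (Fin n) := ⟨⟨0, hn⟩⟩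
  set C : ℝ := ⨆ i : Fin n, ‖(A i).map Complex.ofReal‖ with hCdef
  have hC0 : 0 ≤ C := le_ciSup_of_le (Set.finite_range _).bddAbove ⟨0, hn⟩ (norm_nonneg _)
  refine ⟨max C 1, le_max_right _ _, fun k f => ?_⟩
  refine (aux_specRad_prod_le hd A C hC0
    (fun i => le_ciSup (f := fun i => ‖(A i).map Complex.ofReal‖) (Set.finite_range _).bddAbove i) f).trans ?_
  exact pow_le_pow_left₀ hC0 (le_max_left _ _) k

end Aux

theorem stmt_3 (d n : ℕ) (hd : 0 < d) (hn : 0 < n)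
    (A : Fin n → Matrix (Fin d) (Fin d) ℝ) :
    (∀ m k : ℕ, 0 < m → 0 < k → rhoK A k ≤ rhoK A (m * k)) ∧
    Filter.limsup (rhoK A) Filter.atTop = ⨆ k : ℕ, rhoK A (k + 1) := by
  haveI : Nonempty (Fin n) := ⟨⟨0, hn⟩⟩
  obtain ⟨B, hB1, hBspec⟩ := aux_exists_bound hd hn A
  have hB0 : (0:ℝ) ≤ B := zero_le_one.trans hB1
  have hterm_nonneg : ∀ (k : ℕ) (f : Fin k → Fin n),
      0 ≤ specRad ((List.ofFn fun i => A (f i)).prod) ^ ((1 : ℝ) / (k : ℝ)) := fun k f =>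
    Real.rpow_nonneg (aux_specRad_nonneg hd _) _
  have hterm_le : ∀ (k : ℕ) (f : Fin k → Fin n),
      specRad ((List.ofFn fun i => A (f i)).prod) ^ ((1 : ℝ) / (k : ℝ)) ≤ B := by
    intro k f
    rcases Nat.eq_zero_or_pos k with rfl | hk
    · simpa using hB1
    · calc specRad ((List.ofFn fun i => A (f i)).prod) ^ ((1 : ℝ) / (k : ℝ))
          ≤ (B ^ k) ^ ((1 : ℝ) / (k : ℝ)) :=
            Real.rpow_le_rpow (aux_specRad_nonneg hd _) (hBspec k f) (by positivity)
        _ = B := by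
            rw [← Real.rpow_natCast B k, ← Real.rpow_mul hB0]
            rw [mul_one_div, div_self (by exact_mod_cast hk.ne'), Real.rpow_one]
  have hrho_le : ∀ k, rhoK A k ≤ B := fun k => ciSup_le fun f => hterm_le k f
  have hrho_nonneg : ∀ k, 0 ≤ rhoK A k := by
    intro k
    refine le_trans (hterm_nonneg k (Classical.arbitrary _)) ?_
    exact le_ciSup (f := fun f : Fin k → Fin n =>
      specRad ((List.ofFn fun i => A (f i)).prod) ^ ((1 : ℝ) / (k : ℝ)))
      (Set.finite_range _).bddAbove _
  -- part 1
  have part1 : ∀ m k : ℕ, 0 < m → 0 < k → rhoK A k ≤ rhoK A (m * k) := by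
    intro m k hm hk
    apply ciSup_le
    intro f
    set g : Fin (m * k) → Fin n := fun i => f ⟨(i : ℕ) % k, Nat.mod_lt _ hk⟩ with hg
    have hprod : (List.ofFn fun i => A (g i)).prod
        = ((List.ofFn fun i => A (f i)).prod) ^ m := aux_prod_repeat A hk f
    have key : specRad ((List.ofFn fun i => A (f i)).prod) ^ ((1 : ℝ) / (k : ℝ))
        = specRad ((List.ofFn fun i => A (g i)).prod) ^ ((1 : ℝ) / ((m * k : ℕ) : ℝ)) := by
      rw [hprod, aux_specRad_pow hd _ m,
        ← Real.rpow_natCast (specRad ((List.ofFn fun i => A (f i)).prod)) m,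
        ← Real.rpow_mul (aux_specRad_nonneg hd _)]
      congr 1
      have hm' : (m : ℝ) ≠ 0 := by exact_mod_cast hm.ne'
      have hk' : (k : ℝ) ≠ 0 := by exact_mod_cast hk.ne'
      push_cast
      field_simp
    rw [key]
    exact le_ciSup (f := fun g : Fin (m * k) → Fin n =>
      specRad ((List.ofFn fun i => A (g i)).prod) ^ ((1 : ℝ) / ((m * k : ℕ) : ℝ)))
      (Set.finite_range _).bddAbove g
  refine ⟨part1, ?_⟩
  -- part 2
  have hbddsup : BddAbove (Set.range fun k : ℕ => rhoK A (k + 1)) :=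
    ⟨B, by rintro _ ⟨k, rfl⟩; exact hrho_le _⟩
  apply le_antisymm
  · apply Filter.limsup_le_of_le
    · exact Filter.isCoboundedUnder_le_of_le Filter.atTop (x := 0) hrho_nonneg
    · filter_upwards [Filter.eventually_ge_atTop 1] with k hk
      have : rhoK A ((k - 1) + 1) ≤ ⨆ j : ℕ, rhoK A (j + 1) := le_ciSup hbddsup (k - 1)
      rwa [Nat.sub_add_cancel hk] at this
  · apply ciSup_le
    intro k
    apply Filter.le_limsup_of_frequently_le
    · rw [Filter.frequently_atTop]
      intro N
      refine ⟨(N + 1) * (k + 1), ?_, ?_⟩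
      · calc N ≤ N + 1 := Nat.le_succ N
          _ ≤ (N + 1) * (k + 1) := Nat.le_mul_of_pos_right _ k.succ_pos
      · exact part1 (N + 1) (k + 1) N.succ_pos k.succ_pos
    · exact Filter.isBoundedUnder_of ⟨B, hrho_le⟩
end

section
/- Let 𝓜 = {M₁,…,Mₙ} be a finite set of real square matrices such that M₁ has maximal spectral norm among the M_i (‖M₁‖₂ = max_i ‖M_i‖₂) and the transpose M₁ᵀ also belongs to 𝓜. Then the generalized spectral radius of 𝓜 equals ‖M₁‖₂ = ρ(M₁ M₁ᵀ)^{1/2}, and it is attained at level k = 2, i.e. ρ(𝓜) = ρ₂(𝓜). -/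
open Matrix BigOperators Filter

set_option maxHeartbeats 1000000

section Aux

open scoped Matrix.Norms.L2Operator

noncomputable local instance matrixCStarAlgebra (d : ℕ) :
    CStarAlgebra (Matrix (Fin d) (Fin d) ℂ) :=
  Matrix.instCStarAlgebra

variable {d : ℕ}

/-- complexification as a ring hom -/
noncomputable def cplx {d : ℕ} : Matrix (Fin d) (Fin d) ℝ →+* Matrix (Fin d) (Fin d) ℂ :=
  (Complex.ofRealHom).mapMatrix

lemma map_eq_cplx (M : Matrix (Fin d) (Fin d) ℝ) : M.map Complex.ofReal = cplx M := rfl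

lemma cplx_transpose (M : Matrix (Fin d) (Fin d) ℝ) : cplx Mᵀ = (cplx M)ᴴ := by
  ext i j
  simp [cplx, Matrix.conjTranspose_apply, Matrix.transpose_apply]

lemma specRad_nonneg (M : Matrix (Fin d) (Fin d) ℝ) : 0 ≤ specRad M := by
  apply Real.sSup_nonneg
  rintro x ⟨z, _, rfl⟩
  exact norm_nonneg z

lemma bddAbove_absSpectrum (B : Matrix (Fin d) (Fin d) ℂ) :
    BddAbove ((fun z : ℂ => ‖z‖) '' spectrum ℂ B) :=
  ((spectrum.isCompact B).image (continuous_norm)).bddAbove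

lemma abs_le_specRad {M : Matrix (Fin d) (Fin d) ℝ} {z : ℂ}
    (hz : z ∈ spectrum ℂ (M.map Complex.ofReal)) : ‖z‖ ≤ specRad M :=
  le_csSup (bddAbove_absSpectrum _) ⟨z, hz, rfl⟩

variable (hd : 0 < d)
include hd

lemma specRad_le_norm (M : Matrix (Fin d) (Fin d) ℝ) : specRad M ≤ ‖cplx M‖ := by
  have : Nonempty (Fin d) := ⟨⟨0, hd⟩⟩
  apply Real.sSup_le
  · rintro x ⟨z, hz, rfl⟩
    rw [map_eq_cplx] at hz
    exact spectrum.norm_le_norm_of_mem hz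
  · exact norm_nonneg _

lemma specRad_mul_transpose (M : Matrix (Fin d) (Fin d) ℝ) :
    specRad (M * Mᵀ) = ‖cplx M‖ ^ 2 := by
  have : Nonempty (Fin d) := ⟨⟨0, hd⟩⟩
  have hS : cplx (M * Mᵀ) = cplx M * (cplx M)ᴴ := by
    rw [_root_.map_mul, cplx_transpose]
  have hsa : IsSelfAdjoint (cplx M * (cplx M)ᴴ) := by
    rw [_root_.IsSelfAdjoint]
    simp [Matrix.star_eq_conjTranspose, Matrix.conjTranspose_mul]
  have hnorm : ‖cplx M * (cplx M)ᴴ‖ = ‖cplx M‖ ^ 2 := by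
    have := Matrix.l2_opNorm_conjTranspose_mul_self ((cplx M)ᴴ)
    rw [Matrix.conjTranspose_conjTranspose, Matrix.l2_opNorm_conjTranspose] at this
    rw [this, sq]
  refine le_antisymm ?_ ?_
  · calc specRad (M * Mᵀ) ≤ ‖cplx (M * Mᵀ)‖ := specRad_le_norm hd _
      _ = ‖cplx M‖ ^ 2 := by rw [hS, hnorm]
  · obtain ⟨z, hz, hz'⟩ := spectrum.exists_nnnorm_eq_spectralRadius (cplx M * (cplx M)ᴴ)
    have hrad : spectralRadius ℂ (cplx M * (cplx M)ᴴ) = ‖cplx M * (cplx M)ᴴ‖₊ :=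
      hsa.spectralRadius_eq_nnnorm
    have habs : ‖z‖ = ‖cplx M * (cplx M)ᴴ‖ := by
      rw [hrad] at hz'
      have : (‖z‖₊ : NNReal) = ‖cplx M * (cplx M)ᴴ‖₊ := by exact_mod_cast hz'
      calc ‖z‖ = (‖z‖₊ : ℝ) := rfl
        _ = ‖cplx M * (cplx M)ᴴ‖ := by rw [this]; rfl
    have : ‖z‖ ≤ specRad (M * Mᵀ) := by
      apply abs_le_specRad
      rw [map_eq_cplx, hS]
      exact hz
    rw [habs, hnorm] at this
    exact this

lemma norm_pow_le_specRad_pow (M : Matrix (Fin d) (Fin d) ℝ) (m : ℕ) :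
    ‖cplx M‖ ^ (2 * m) ≤ specRad ((M * Mᵀ) ^ m) := by
  have : Nonempty (Fin d) := ⟨⟨0, hd⟩⟩
  have hS : cplx (M * Mᵀ) = cplx M * (cplx M)ᴴ := by
    rw [_root_.map_mul, cplx_transpose]
  have hsa : IsSelfAdjoint (cplx M * (cplx M)ᴴ) := by
    rw [_root_.IsSelfAdjoint]
    simp [Matrix.star_eq_conjTranspose, Matrix.conjTranspose_mul]
  obtain ⟨z, hz, hz'⟩ := spectrum.exists_nnnorm_eq_spectralRadius (cplx M * (cplx M)ᴴ)
  have hrad : spectralRadius ℂ (cplx M * (cplx M)ᴴ) = ‖cplx M * (cplx M)ᴴ‖₊ :=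
    hsa.spectralRadius_eq_nnnorm
  have hnorm : ‖cplx M * (cplx M)ᴴ‖ = ‖cplx M‖ ^ 2 := by
    have := Matrix.l2_opNorm_conjTranspose_mul_self ((cplx M)ᴴ)
    rw [Matrix.conjTranspose_conjTranspose, Matrix.l2_opNorm_conjTranspose] at this
    rw [this, sq]
  have habs : ‖z‖ = ‖cplx M‖ ^ 2 := by
    rw [hrad] at hz'
    have h2 : (‖z‖₊ : NNReal) = ‖cplx M * (cplx M)ᴴ‖₊ := by exact_mod_cast hz'
    calc ‖z‖ = (‖z‖₊ : ℝ) := rfl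
      _ = ‖cplx M * (cplx M)ᴴ‖ := by rw [h2]; rfl
      _ = ‖cplx M‖ ^ 2 := hnorm
  -- z ^ m belongs to spectrum of (cplx M * (cplx M)ᴴ) ^ m
  have hpow : z ^ m ∈ spectrum ℂ ((cplx M * (cplx M)ᴴ) ^ m) := by
    have := spectrum.subset_polynomial_aeval (cplx M * (cplx M)ᴴ) (Polynomial.X ^ m : Polynomial ℂ)
    have hmem : z ^ m ∈ (fun x => Polynomial.eval x ((Polynomial.X : Polynomial ℂ) ^ m)) ''
        spectrum ℂ (cplx M * (cplx M)ᴴ) := ⟨z, hz, by simp⟩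
    have := this hmem
    simpa using this
  have : ‖z ^ m‖ ≤ specRad ((M * Mᵀ) ^ m) := by
    apply abs_le_specRad
    rw [map_eq_cplx, map_pow, hS]
    exact hpow
  calc ‖cplx M‖ ^ (2 * m) = (‖cplx M‖ ^ 2) ^ m := by rw [← pow_mul]
    _ = ‖z ^ m‖ := by rw [norm_pow, habs]
    _ ≤ specRad ((M * Mᵀ) ^ m) := this

lemma norm_list_prod_le {r : ℝ} :
    ∀ (l : List (Matrix (Fin d) (Fin d) ℂ)), (∀ x ∈ l, ‖x‖ ≤ r) →
      ‖l.prod‖ ≤ r ^ l.length := by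
  have : Nonempty (Fin d) := ⟨⟨0, hd⟩⟩
  intro l
  induction l with
  | nil => intro _; simp
  | cons a l ih =>
    intro h
    have ha : ‖a‖ ≤ r := h a List.mem_cons_self
    have hr : 0 ≤ r := le_trans (norm_nonneg a) ha
    calc ‖(a :: l).prod‖ = ‖a * l.prod‖ := by rw [List.prod_cons]
      _ ≤ ‖a‖ * ‖l.prod‖ := norm_mul_le _ _
      _ ≤ r * r ^ l.length := by
          apply mul_le_mul ha (ih fun x hx => h x (List.mem_cons_of_mem a hx))
            (norm_nonneg _) hr
      _ = r ^ (a :: l).length := by rw [List.length_cons, pow_succ']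

lemma sqrt_specRad_eq_norm (M : Matrix (Fin d) (Fin d) ℝ) :
    Real.sqrt (specRad (M * Mᵀ)) = ‖cplx M‖ := by
  rw [specRad_mul_transpose hd, Real.sqrt_sq (norm_nonneg _)]

lemma specRad_ofFn_prod_le {n : ℕ} (A : Fin n → Matrix (Fin d) (Fin d) ℝ) (i₀ : Fin n)
    (hmax : ∀ i, Real.sqrt (specRad (A i * (A i)ᵀ)) ≤ Real.sqrt (specRad (A i₀ * (A i₀)ᵀ)))
    (k : ℕ) (f : Fin k → Fin n) :
    specRad ((List.ofFn fun i => A (f i)).prod) ≤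
      Real.sqrt (specRad (A i₀ * (A i₀)ᵀ)) ^ k := by
  set r := Real.sqrt (specRad (A i₀ * (A i₀)ᵀ)) with hr
  have hrn : r = ‖cplx (A i₀)‖ := sqrt_specRad_eq_norm hd _
  have hbound : ∀ i, ‖cplx (A i)‖ ≤ r := by
    intro i
    rw [← sqrt_specRad_eq_norm hd]
    exact hmax i
  calc specRad ((List.ofFn fun i => A (f i)).prod)
      ≤ ‖cplx ((List.ofFn fun i => A (f i)).prod)‖ := specRad_le_norm hd _
    _ = ‖((List.ofFn fun i => A (f i)).map cplx).prod‖ := by rw [map_list_prod]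
    _ = ‖(List.ofFn fun i => cplx (A (f i))).prod‖ := by rw [List.map_ofFn]; rfl
    _ ≤ r ^ (List.ofFn fun i => cplx (A (f i))).length := by
        apply norm_list_prod_le hd
        intro x hx
        rw [List.mem_ofFn] at hx
        obtain ⟨i, rfl⟩ := hx
        exact hbound _
    _ = r ^ k := by rw [List.length_ofFn]

lemma pow_le_specRad_pow {n : ℕ} (A : Fin n → Matrix (Fin d) (Fin d) ℝ) (i₀ : Fin n) (m : ℕ) :
    Real.sqrt (specRad (A i₀ * (A i₀)ᵀ)) ^ (2 * m) ≤ specRad ((A i₀ * (A i₀)ᵀ) ^ m) := by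
  rw [sqrt_specRad_eq_norm hd]
  exact norm_pow_le_specRad_pow hd _ m

end Aux

/-- Alternating product lemma. -/
lemma alt_prod {α : Type*} [Monoid α] (X Y : α) :
    ∀ m : ℕ, (List.ofFn fun i : Fin (2 * m) =>
      if i.val % 2 = 0 then X else Y).prod = (X * Y) ^ m := by
  intro m
  induction m with
  | zero => simp
  | succ m ih =>
    have h2 : 2 * (m + 1) = (2 * m) + 1 + 1 := by ring
    rw [show (List.ofFn fun i : Fin (2 * (m + 1)) => if i.val % 2 = 0 then X else Y)
        = (List.ofFn fun i : Fin ((2 * m) + 1 + 1) =>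
            if i.val % 2 = 0 then X else Y) from by
      congr 1]
    rw [List.ofFn_succ]
    have hfun : (fun i : Fin ((2 * m) + 1) =>
        if (Fin.succ i).val % 2 = 0 then X else Y)
        = fun i : Fin ((2 * m) + 1) => if i.val % 2 = 1 then X else Y := by
      funext i
      have : (Fin.succ i).val = i.val + 1 := rfl
      rw [this]
      rcases Nat.even_or_odd i.val with h | h
      · obtain ⟨c, hc⟩ := h
        rw [hc]
        have h1 : (c + c) % 2 = 0 := by omega
        have h2' : (c + c + 1) % 2 = 1 := by omega
        simp [h1, h2']
      · obtain ⟨c, hc⟩ := h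
        rw [hc]
        have h1 : (2 * c + 1) % 2 = 1 := by omega
        have h2' : (2 * c + 1 + 1) % 2 = 0 := by omega
        simp [h1, h2']
    rw [hfun, List.ofFn_succ]
    have hfun2 : (fun i : Fin (2 * m) =>
        if (Fin.succ i).val % 2 = 1 then X else Y)
        = fun i : Fin (2 * m) => if i.val % 2 = 0 then X else Y := by
      funext i
      have : (Fin.succ i).val = i.val + 1 := rfl
      rw [this]
      rcases Nat.even_or_odd i.val with h | h
      · obtain ⟨c, hc⟩ := h
        rw [hc]
        have h1 : (c + c) % 2 = 0 := by omega
        have h2' : (c + c + 1) % 2 = 1 := by omega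
        simp [h1, h2']
      · obtain ⟨c, hc⟩ := h
        rw [hc]
        have h1 : (2 * c + 1) % 2 = 1 := by omega
        have h2' : (2 * c + 1 + 1) % 2 = 0 := by omega
        simp [h1, h2']
    rw [hfun2]
    simp only [List.prod_cons, Fin.val_zero]
    norm_num
    rw [ih, ← mul_assoc, pow_succ']

theorem stmt_5 (d n : ℕ) (hd : 0 < d) (hn : 0 < n)
    (A : Fin n → Matrix (Fin d) (Fin d) ℝ) (i₀ : Fin n)
    (hmax : ∀ i, Real.sqrt (specRad (A i * (A i)ᵀ)) ≤ Real.sqrt (specRad (A i₀ * (A i₀)ᵀ)))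
    (htrans : ∃ j, A j = (A i₀)ᵀ) :
    Filter.limsup (rhoK A) Filter.atTop = Real.sqrt (specRad (A i₀ * (A i₀)ᵀ)) ∧
    Filter.limsup (rhoK A) Filter.atTop = rhoK A 2 := by
  have : Nonempty (Fin n) := ⟨⟨0, hn⟩⟩
  set r := Real.sqrt (specRad (A i₀ * (A i₀)ᵀ)) with hr
  have hr0 : 0 ≤ r := Real.sqrt_nonneg _
  -- upper bound
  have h_upper : ∀ k : ℕ, 1 ≤ k → rhoK A k ≤ r := by
    intro k hk
    have hk' : (k : ℝ) ≠ 0 := Nat.cast_ne_zero.mpr (by omega)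
    apply ciSup_le
    intro f
    have h1 : specRad ((List.ofFn fun i => A (f i)).prod) ≤ r ^ k :=
      specRad_ofFn_prod_le hd A i₀ hmax k f
    calc specRad ((List.ofFn fun i => A (f i)).prod) ^ ((1 : ℝ) / (k : ℝ))
        ≤ (r ^ k) ^ ((1 : ℝ) / (k : ℝ)) :=
          Real.rpow_le_rpow (specRad_nonneg _) h1 (by positivity)
      _ = r := by
          rw [← Real.rpow_natCast r k, ← Real.rpow_mul hr0]
          rw [mul_one_div, div_self hk', Real.rpow_one]
  -- nonnegativity of rhoK
  have h_nonneg : ∀ k : ℕ, 0 ≤ rhoK A k := by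
    intro k
    have hbd : BddAbove (Set.range fun f : Fin k → Fin n =>
        specRad ((List.ofFn fun i => A (f i)).prod) ^ ((1 : ℝ) / (k : ℝ))) :=
      Set.Finite.bddAbove (Set.finite_range _)
    refine le_trans ?_ (le_ciSup hbd (Classical.arbitrary _))
    exact Real.rpow_nonneg (specRad_nonneg _) _
  -- lower bound at even indices
  obtain ⟨j, hj⟩ := htrans
  have h_even : ∀ m : ℕ, 1 ≤ m → r ≤ rhoK A (2 * m) := by
    intro m hm
    have hm' : ((2 * m : ℕ) : ℝ) ≠ 0 := Nat.cast_ne_zero.mpr (by omega)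
    set f : Fin (2 * m) → Fin n := fun i => if i.val % 2 = 0 then i₀ else j with hf
    have hprod : (List.ofFn fun i => A (f i)).prod = (A i₀ * (A i₀)ᵀ) ^ m := by
      have heq : (fun i : Fin (2 * m) => A (f i))
          = fun i : Fin (2 * m) => if i.val % 2 = 0 then A i₀ else (A i₀)ᵀ := by
        funext i
        rw [hf]
        simp only [apply_ite A, hj]
      rw [heq]
      exact alt_prod (A i₀) ((A i₀)ᵀ) m
    have h1 : r ^ (2 * m) ≤ specRad ((List.ofFn fun i => A (f i)).prod) := by
      rw [hprod]
      exact pow_le_specRad_pow hd A i₀ m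
    have h2 : r ≤ specRad ((List.ofFn fun i => A (f i)).prod) ^ ((1 : ℝ) / ((2 * m : ℕ) : ℝ)) := by
      calc r = (r ^ (2 * m)) ^ ((1 : ℝ) / ((2 * m : ℕ) : ℝ)) := by
              rw [← Real.rpow_natCast r (2 * m), ← Real.rpow_mul hr0]
              rw [mul_one_div, div_self hm', Real.rpow_one]
        _ ≤ specRad ((List.ofFn fun i => A (f i)).prod) ^ ((1 : ℝ) / ((2 * m : ℕ) : ℝ)) :=
              Real.rpow_le_rpow (pow_nonneg hr0 _) h1 (by positivity)
    have hbd : BddAbove (Set.range fun g : Fin (2 * m) → Fin n =>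
        specRad ((List.ofFn fun i => A (g i)).prod) ^ ((1 : ℝ) / ((2 * m : ℕ) : ℝ))) :=
      Set.Finite.bddAbove (Set.finite_range _)
    exact h2.trans (le_ciSup hbd f)
  -- rhoK A 2 = r
  have h2eq : rhoK A 2 = r := by
    have hle := h_upper 2 one_le_two
    have hge := h_even 1 le_rfl
    norm_num at hge
    exact le_antisymm hle hge
  -- limsup computation
  have hev : ∀ᶠ k in Filter.atTop, rhoK A k ≤ r := Filter.eventually_atTop.mpr ⟨1, h_upper⟩
  have hbdd : Filter.IsBoundedUnder (· ≤ ·) Filter.atTop (rhoK A) :=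
    ⟨r, Filter.eventually_map.mpr hev⟩
  have hbdd' : Filter.IsBoundedUnder (· ≥ ·) Filter.atTop (rhoK A) :=
    ⟨0, Filter.eventually_map.mpr (Filter.Eventually.of_forall h_nonneg)⟩
  have hcob : Filter.IsCoboundedUnder (· ≤ ·) Filter.atTop (rhoK A) :=
    hbdd'.isCoboundedUnder_le
  have hfreq : ∃ᶠ k in Filter.atTop, r ≤ rhoK A k := by
    rw [Filter.frequently_atTop]
    intro N
    exact ⟨2 * (N + 1), by omega, h_even (N + 1) (by omega)⟩
  have hmain : Filter.limsup (rhoK A) Filter.atTop = r :=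
    le_antisymm (Filter.limsup_le_of_le hcob hev)
      (Filter.le_limsup_of_frequently_le hfreq hbdd)
  exact ⟨hmain, by rw [hmain, h2eq]⟩
end

section
/- Define Ĥ^{(N)} = A^{(1)} A^{(2)} ⋯ A^{(N)}, the ordered product of the matrices A^{(k)} = I + S^{(k)}. Then for each 1 ≤ j ≤ N the j-th column sum of Ĥ^{(N)} is 3^N − 2·3^{j−1}, and the trace of Ĥ^{(N)} is 3^N − N − 1. -/
open Matrix BigOperators

/-- `Amat N k` is the matrix `I + S^(k)` (0-indexed `k`): row `k` of `S^(k)` is `2`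
everywhere except `0` on the diagonal, and all other rows of `S^(k)` are zero. -/
def Amat (N : ℕ) (k : ℕ) : Matrix (Fin N) (Fin N) ℝ :=
  fun i j => (if i = j then 1 else 0) + (if (i : ℕ) = k ∧ (j : ℕ) ≠ k then 2 else 0)

/-- The ordered product `Ĥ^(N) = A^(1) A^(2) ⋯ A^(N)`. -/
noncomputable def Hhat (N : ℕ) : Matrix (Fin N) (Fin N) ℝ :=
  ((List.range N).map (Amat N)).prod

/-- Entry formula for the partial product of the first `m` matrices. -/
noncomputable def Pent (m i j : ℕ) : ℝ :=
  if i < m then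
    2 * 3 ^ (m - 1 - i) -
      (if j = i then 1 else if i < j ∧ j < m then 4 * 3 ^ (j - i - 1) else 0)
  else (if i = j then 1 else 0)

lemma pent_step_eq (m i : ℕ) : Pent (m + 1) i m = Pent m i m := by
  unfold Pent
  rcases lt_trichotomy i m with h | h | h
  · have h1 : i < m + 1 := by omega
    have h2 : ¬ (m = i) := by omega
    have h3 : i < m ∧ m < m + 1 := ⟨h, by omega⟩
    have h4 : ¬ (i < m ∧ m < m) := by omega
    rw [if_pos h1, if_pos h, if_neg h2, if_neg h2, if_pos h3, if_neg h4]
    have e1 : m - 1 - i + 1 = m - i := by omega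
    have e2 : m + 1 - 1 - i = m - i := by omega
    have e3 : m - i - 1 = m - 1 - i := by omega
    rw [e2, e3, ← e1, pow_succ]
    ring
  · subst h
    norm_num [Pent]
  · have h1 : ¬ (i < m + 1) := by omega
    have h2 : ¬ (i < m) := by omega
    have h3 : ¬ (i = m) := by omega
    simp [h1, h2, h3]

lemma pent_step_ne (m i j : ℕ) (hj : j ≠ m) :
    Pent (m + 1) i j = Pent m i j + 2 * Pent m i m := by
  unfold Pent
  rcases lt_trichotomy i m with h | h | h
  · have h1 : i < m + 1 := by omega
    have h2 : ¬ (m = i) := by omega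
    have h4 : ¬ (i < m ∧ m < m) := by omega
    have hcond : (i < j ∧ j < m + 1) = (i < j ∧ j < m) := by
      apply propext; omega
    rw [if_pos h1, if_pos h, if_pos h, if_neg h2, if_neg h4]
    simp only [hcond]
    have e1 : m - 1 - i + 1 = m - i := by omega
    have e2 : m + 1 - 1 - i = m - i := by omega
    rw [e2, ← e1, pow_succ]
    ring
  · subst h
    have h1 : i < i + 1 := by omega
    have h2 : ¬ (i < i) := by omega
    have h3 : ¬ (j = i) := by omega
    have h4 : ¬ (i < j ∧ j < i + 1) := by omega
    have h5 : ¬ (i = j) := by omega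
    norm_num [h1, h2, h3, h4, h5]
  · have h1 : ¬ (i < m + 1) := by omega
    have h2 : ¬ (i < m) := by omega
    have h3 : ¬ (i = m) := by omega
    simp [h1, h2, h3]

lemma prod_eq_pent (N : ℕ) : ∀ m, m ≤ N →
    ((List.range m).map (Amat N)).prod = Matrix.of (fun i j : Fin N => Pent m (i : ℕ) (j : ℕ)) := by
  intro m
  induction m with
  | zero =>
    intro _
    ext i j
    simp [Pent, Matrix.one_apply, Fin.ext_iff]
  | succ m ih =>
    intro hm
    have hmN : m < N := by omega
    rw [List.range_succ, List.map_append, List.prod_append, List.map_singleton,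
      List.prod_singleton, ih (by omega)]
    ext i j
    rw [Matrix.mul_apply]
    by_cases hj : (j : ℕ) = m
    · have hA : ∀ l : Fin N, Amat N m l j = if l = j then 1 else 0 := by
        intro l; simp [Amat, hj]
      simp only [Matrix.of_apply, hA, mul_ite, mul_one, mul_zero,
        Finset.sum_ite_eq', Finset.mem_univ, if_true]
      rw [← hj, pent_step_eq]
    · set km : Fin N := ⟨m, hmN⟩ with hkm
      have hA : ∀ l : Fin N, Amat N m l j =
          (if l = j then 1 else 0) + (if l = km then 2 else 0) := by
        intro l
        simp [Amat, hj, hkm, Fin.ext_iff]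
      simp only [Matrix.of_apply, hA, mul_add, Finset.sum_add_distrib, mul_ite,
        mul_one, mul_zero, Finset.sum_ite_eq', Finset.mem_univ, if_true]
      rw [pent_step_ne _ _ _ hj]
      simp [hkm]
      try ring

lemma geom3 (n : ℕ) : ∑ i ∈ Finset.range n, (3:ℝ) ^ i = (3 ^ n - 1) / 2 := by
  have := geom_sum_eq (by norm_num : (3:ℝ) ≠ 1) n
  rw [this]; norm_num

lemma geom3rev (n : ℕ) : ∑ i ∈ Finset.range n, (3:ℝ) ^ (n - 1 - i) = (3 ^ n - 1) / 2 := by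
  rw [Finset.sum_range_reflect (fun i => (3:ℝ) ^ i) n, geom3]

lemma pent_N (N i j : ℕ) (hi : i < N) (hj : j < N) :
    Pent N i j = 2 * 3 ^ (N - 1 - i) -
      (if j = i then 1 else if i < j then 4 * 3 ^ (j - i - 1) else 0) := by
  unfold Pent
  rw [if_pos hi]
  congr 1
  by_cases h1 : j = i
  · simp [h1]
  · simp only [h1, if_false]
    by_cases h2 : i < j
    · simp [h2, hj]
    · simp [h2]

theorem stmt_12 (N : ℕ) :
    (∀ j : Fin N, ∑ i, Hhat N i j = 3 ^ N - 2 * 3 ^ (j : ℕ)) ∧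
    Matrix.trace (Hhat N) = 3 ^ N - N - 1 := by
  have hH : ∀ i j : Fin N, Hhat N i j = Pent N (i : ℕ) (j : ℕ) := by
    intro i j
    rw [Hhat, prod_eq_pent N N le_rfl]
    rfl
  have s1 : ∑ i ∈ Finset.range N, 2 * (3:ℝ) ^ (N - 1 - i) = 3 ^ N - 1 := by
    rw [← Finset.mul_sum, geom3rev]; ring
  constructor
  · intro j
    have hjN : (j:ℕ) < N := j.2
    have key : ∑ i : Fin N, Hhat N i j = ∑ i ∈ Finset.range N, Pent N i (j:ℕ) := by
      rw [← Fin.sum_univ_eq_sum_range (fun i => Pent N i (j:ℕ)) N]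
      exact Finset.sum_congr rfl (fun i _ => hH i j)
    rw [key, Finset.sum_congr rfl (fun i hi =>
        pent_N N i (j:ℕ) (Finset.mem_range.1 hi) hjN), Finset.sum_sub_distrib, s1]
    have s2 : (∑ i ∈ Finset.range N,
        (if (j:ℕ) = i then (1:ℝ) else if i < (j:ℕ) then 4 * 3 ^ ((j:ℕ) - i - 1) else 0))
        = 2 * 3 ^ (j:ℕ) - 1 := by
      rw [← Finset.sum_subset (Finset.range_subset_range.2 hjN)
        (by intro i _ hi2
            rw [Finset.mem_range] at hi2
            push_neg at hi2
            have h1 : ¬ ((j:ℕ) = i) := by omega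
            have h2 : ¬ (i < (j:ℕ)) := by omega
            simp [h1, h2])]
      rw [Finset.sum_range_succ]
      have hd : ∀ i ∈ Finset.range (j:ℕ),
          (if (j:ℕ) = i then (1:ℝ) else if i < (j:ℕ) then 4 * 3 ^ ((j:ℕ) - i - 1) else 0)
          = 4 * 3 ^ ((j:ℕ) - 1 - i) := by
        intro i hi
        rw [Finset.mem_range] at hi
        have h1 : ¬ ((j:ℕ) = i) := by omega
        have h3 : (j:ℕ) - i - 1 = (j:ℕ) - 1 - i := by omega
        simp [h1, hi, h3]
      rw [Finset.sum_congr rfl hd]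
      simp only [lt_self_iff_false, if_false, if_true]
      rw [← Finset.mul_sum, geom3rev]
      ring
    rw [s2]; ring
  · rw [Matrix.trace]
    have hdiag : ∀ i : Fin N, Matrix.diag (Hhat N) i
        = (fun n : ℕ => 2 * (3:ℝ) ^ (N - 1 - n) - 1) (i : ℕ) := by
      intro i
      rw [Matrix.diag_apply, hH, pent_N N _ _ i.2 i.2]
      simp
    rw [Finset.sum_congr rfl (fun i _ => hdiag i),
      Fin.sum_univ_eq_sum_range (fun n : ℕ => 2 * (3:ℝ) ^ (N - 1 - n) - 1) N,
      Finset.sum_sub_distrib, s1]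
    simp
    ring
end

section
/- More generally, for 1 ≤ k ≤ N, the partial product Ĥ^{(k)} = A^{(1)}⋯A^{(k)} satisfies c_j(Ĥ^{(k)}) = 3^k − 2·3^{j−1} for j ≤ k and c_j(Ĥ^{(k)}) = 3^k for j > k. -/
open Matrix BigOperators

/-- The partial ordered product `Ĥ^(k) = A^(1) A^(2) ⋯ A^(k)`. -/
noncomputable def Hpart (N k : ℕ) : Matrix (Fin N) (Fin N) ℝ :=
  ((List.range k).map (Amat N)).prod

lemma colsum_mul (N : ℕ) (M A : Matrix (Fin N) (Fin N) ℝ) (j : Fin N) :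
    ∑ i, (M * A) i j = ∑ l, (∑ i, M i l) * A l j := by
  simp only [Matrix.mul_apply, Finset.sum_mul]
  rw [Finset.sum_comm]

theorem stmt_13 (N k : ℕ) (hk : k ≤ N) :
    ∀ j : Fin N,
      ((j : ℕ) < k → ∑ i, Hpart N k i j = 3 ^ k - 2 * 3 ^ (j : ℕ)) ∧
      (k ≤ (j : ℕ) → ∑ i, Hpart N k i j = 3 ^ k) := by
  induction k with
  | zero =>
    intro j
    refine ⟨fun h => by omega, fun _ => ?_⟩
    simp [Hpart, Matrix.one_apply]
  | succ k ih =>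
    have hkN : k < N := hk
    have ih' := ih (le_of_lt hkN)
    have hH : Hpart N (k+1) = Hpart N k * Amat N k := by
      simp [Hpart, List.range_succ]
    intro j
    set kk : Fin N := ⟨k, hkN⟩ with hkk
    have hck : ∑ i, Hpart N k i kk = 3 ^ k := (ih' kk).2 (le_refl k)
    have hA : ∀ l : Fin N, Amat N k l j
        = (if l = j then (1:ℝ) else 0) + (if l = kk ∧ j ≠ kk then 2 else 0) := by
      intro l
      have h1 : ((l : ℕ) = k) ↔ l = kk := by
        rw [Fin.ext_iff]
      have h2 : ((j : ℕ) ≠ k) ↔ j ≠ kk := by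
        simp [Ne, Fin.ext_iff, hkk]
      simp [Amat, h1, h2]
    have key : ∑ i, Hpart N (k+1) i j
        = (∑ i, Hpart N k i j) + (if j = kk then 0 else 2 * 3 ^ k) := by
      rw [hH, colsum_mul]
      simp only [hA, mul_add, Finset.sum_add_distrib, mul_ite, mul_one, mul_zero]
      rw [Finset.sum_ite_eq' Finset.univ j (fun l => ∑ i, Hpart N k i l)]
      by_cases hj : j = kk
      · simp [hj]
      · have : ∀ l : Fin N, (if l = kk ∧ j ≠ kk then (∑ i, Hpart N k i l) * 2 else 0)
            = if l = kk then (∑ i, Hpart N k i l) * 2 else 0 := by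
          intro l; simp [hj]
        simp only [this]
        rw [Finset.sum_ite_eq' Finset.univ kk (fun l => (∑ i, Hpart N k i l) * 2)]
        simp [hj, hck]
        ring
    refine ⟨fun hj => ?_, fun hj => ?_⟩
    · by_cases hjk : j = kk
      · rw [key, if_pos hjk, hjk, hck, add_zero]
        have hkkv : ((kk : Fin N) : ℕ) = k := rfl
        rw [hkkv]; ring
      · have hjk' : (j : ℕ) < k := by
          have : (j : ℕ) ≠ k := fun h => hjk (Fin.ext h)
          omega
        rw [key, if_neg hjk, (ih' j).1 hjk']
        ring
    · have hjk : j ≠ kk := by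
        intro h
        have : (j : ℕ) = k := by rw [h]
        omega
      have hjk' : k ≤ (j : ℕ) := by
        have : (j : ℕ) ≠ k := fun h => hjk (Fin.ext h)
        omega
      rw [key, if_neg hjk, (ih' j).2 hjk']
      ring
end

section
/- The spectral radius of Ĥ^{(N)} = A^{(1)}⋯A^{(N)} satisfies (3^N − N − 1)/N ≤ ρ(Ĥ^{(N)}) ≤ 3^N − 2. -/
open Matrix BigOperators

open Polynomial

lemma det_sub_eq_charpoly_eval {d : ℕ} (M : Matrix (Fin d) (Fin d) ℂ) (z : ℂ) :
    (algebraMap ℂ (Matrix (Fin d) (Fin d) ℂ) z - M).det = (Matrix.charpoly M).eval z := by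
  rw [Matrix.charpoly, ← Polynomial.coe_evalRingHom, RingHom.map_det]
  congr 1
  ext i j
  by_cases h : i = j <;>
    simp [h, Matrix.charmatrix_apply, Matrix.algebraMap_matrix_apply, Matrix.diagonal_apply]

lemma mem_spectrum_iff_det {d : ℕ} (M : Matrix (Fin d) (Fin d) ℂ) (z : ℂ) :
    z ∈ spectrum ℂ M ↔ (algebraMap ℂ (Matrix (Fin d) (Fin d) ℂ) z - M).det = 0 := by
  rw [spectrum.mem_iff, Matrix.isUnit_iff_isUnit_det, isUnit_iff_ne_zero, not_not]

lemma mem_spectrum_iff_root {d : ℕ} (M : Matrix (Fin d) (Fin d) ℂ) (z : ℂ) :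
    z ∈ spectrum ℂ M ↔ (Matrix.charpoly M).IsRoot z := by
  rw [mem_spectrum_iff_det, det_sub_eq_charpoly_eval, Polynomial.IsRoot]

lemma transpose_algebraMap {d : ℕ} (z : ℂ) :
    (algebraMap ℂ (Matrix (Fin d) (Fin d) ℂ) z)ᵀ = algebraMap ℂ (Matrix (Fin d) (Fin d) ℂ) z := by
  ext i j
  by_cases h : i = j <;> simp [h, Matrix.transpose_apply, Matrix.algebraMap_matrix_apply]
  · exact fun h' => absurd h'.symm h

/-- a spectrum point admits an eigenvector of the transpose -/
lemma exists_eigvec {d : ℕ} (M : Matrix (Fin d) (Fin d) ℂ) (z : ℂ) (hz : z ∈ spectrum ℂ M) :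
    ∃ v : Fin d → ℂ, v ≠ 0 ∧ Mᵀ *ᵥ v = z • v := by
  rw [mem_spectrum_iff_det] at hz
  have hdet : (algebraMap ℂ (Matrix (Fin d) (Fin d) ℂ) z - Mᵀ).det = 0 := by
    rw [← Matrix.det_transpose, Matrix.transpose_sub, transpose_algebraMap,
      Matrix.transpose_transpose, hz]
  obtain ⟨v, hv0, hv⟩ := (Matrix.exists_mulVec_eq_zero_iff).mpr hdet
  refine ⟨v, hv0, ?_⟩
  have := hv
  rw [Matrix.sub_mulVec, sub_eq_zero] at this
  rw [← this, Algebra.algebraMap_eq_smul_one, Matrix.smul_mulVec, Matrix.one_mulVec]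

/-- column-sum bound on spectrum points -/
lemma spectrum_abs_le {d : ℕ} (M : Matrix (Fin d) (Fin d) ℂ) (B : ℝ)
    (hB : ∀ j, ∑ i, ‖M i j‖ ≤ B) (z : ℂ) (hz : z ∈ spectrum ℂ M) :
    ‖z‖ ≤ B := by
  obtain ⟨v, hv0, hv⟩ := exists_eigvec M z hz
  have hne : (Finset.univ : Finset (Fin d)).Nonempty := by
    rcases Function.ne_iff.mp hv0 with ⟨i, -⟩
    exact ⟨i, Finset.mem_univ i⟩
  obtain ⟨i, -, hi⟩ := Finset.exists_max_image Finset.univ (fun k => ‖v k‖) hne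
  have hvi : 0 < ‖v i‖ := by
    rcases Function.ne_iff.mp hv0 with ⟨k, hk⟩
    have : 0 < ‖v k‖ := by simpa using hk
    exact lt_of_lt_of_le this (hi k (Finset.mem_univ k))
  have heq : z * v i = ∑ j, M j i * v j := by
    have := congrFun hv i
    simp only [Matrix.mulVec, dotProduct, Pi.smul_apply, smul_eq_mul,
      Matrix.transpose_apply] at this
    rw [← this]
  have : ‖z‖ * ‖v i‖ ≤ B * ‖v i‖ := by
    rw [← norm_mul, heq]
    calc ‖∑ j, M j i * v j‖ ≤ ∑ j, ‖M j i * v j‖ := by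
          exact norm_sum_le _ _
      _ ≤ ∑ j, ‖M j i‖ * ‖v i‖ := by
          refine Finset.sum_le_sum fun j _ => ?_
          rw [norm_mul]
          exact mul_le_mul_of_nonneg_left (hi j (Finset.mem_univ j)) (by positivity)
      _ = (∑ j, ‖M j i‖) * ‖v i‖ := by rw [Finset.sum_mul]
      _ ≤ B * ‖v i‖ := mul_le_mul_of_nonneg_right (hB i) hvi.le
  exact le_of_mul_le_mul_right this hvi


/-- closed form for entries of the partial products -/
def ent (m i j : ℕ) : ℝ :=
  if i < m then
    2 * 3 ^ (m - 1 - i) -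
      (if j = i then 1 else if i < j ∧ j < m then 4 * 3 ^ (j - i - 1) else 0)
  else if i = j then 1 else 0

lemma ent_step (m i j : ℕ) :
    ent m i j + (if j ≠ m then 2 * ent m i m else 0) = ent (m + 1) i j := by
  rcases lt_trichotomy i m with him | him | him
  · -- i < m
    have h1 : m - 1 - i + 1 = m - i := by omega
    have h2 : m + 1 - 1 - i = m - i := by omega
    have hmi : ¬ (i < m ∧ m < m) := by omega
    have hmim : m ≠ i := by omega
    rw [ent, ent, ent, if_pos him, if_pos him, if_pos (by omega : i < m + 1), h2,
      if_neg hmim, if_neg hmi]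
    by_cases hj : j = m
    · rw [if_neg (by omega : ¬ j = i), if_pos (⟨by omega, by omega⟩ : i < j ∧ j < m + 1),
        if_neg (not_not_intro hj), if_neg (by omega : ¬ (i < j ∧ j < m))]
      have h3 : j - i - 1 = m - 1 - i := by omega
      rw [h3, ← h1, pow_succ, if_neg (by omega : ¬ j = i)]
      ring
    · rw [if_pos hj]
      by_cases hji : j = i
      · rw [if_pos hji, if_pos hji, ← h1, pow_succ]; ring
      · rw [if_neg hji, if_neg hji]
        by_cases hjm : i < j ∧ j < m
        · rw [if_pos hjm, if_pos ⟨hjm.1, by omega⟩, ← h1, pow_succ]; ring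
        · rw [if_neg hjm, if_neg (by omega : ¬ (i < j ∧ j < m + 1)), ← h1, pow_succ]; ring
  · -- i = m
    subst him
    rw [ent, ent, ent, if_neg (by omega : ¬ i < i), if_neg (by omega : ¬ i < i),
      if_pos (by omega : i < i + 1)]
    have : i + 1 - 1 - i = 0 := by omega
    rw [this, pow_zero, if_pos rfl]
    by_cases hj : j = i
    · subst hj; rw [if_pos rfl, if_neg (by simp), if_pos rfl]; ring
    · rw [if_neg (fun h => hj h.symm), if_pos hj, if_neg hj,
        if_neg (by omega : ¬ (i < j ∧ j < i + 1))]
      ring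
  · -- i > m
    rw [ent, ent, ent, if_neg (by omega : ¬ i < m), if_neg (by omega : ¬ i < m),
      if_neg (by omega : ¬ i < m + 1), if_neg (by omega : ¬ i = m)]
    by_cases hj : j = m
    · rw [if_neg (not_not_intro hj)]; ring
    · rw [if_pos hj]; ring

lemma key (N : ℕ) : ∀ m, m ≤ N → ∀ i j : Fin N,
    (((List.range m).map (Amat N)).prod) i j = ent m i j := by
  intro m
  induction m with
  | zero =>
    intro _ i j
    simp only [List.range_zero, List.map_nil, List.prod_nil, ent]
    rw [if_neg (by omega : ¬ (i:ℕ) < 0), Matrix.one_apply]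
    simp [Fin.val_eq_val]
  | succ m ih =>
    intro hm i j
    rw [List.range_succ, List.map_append, List.prod_append, List.map_singleton,
      List.prod_singleton, Matrix.mul_apply]
    have hmN : m < N := hm
    have expand : ∀ k : Fin N, (((List.range m).map (Amat N)).prod) i k * Amat N m k j
        = (if k = j then ent m i k else 0) +
          (if (k:ℕ) = m ∧ (j:ℕ) ≠ m then 2 * ent m i k else 0) := by
      intro k
      rw [ih (le_of_lt hmN) i k, Amat]
      by_cases h1 : k = j <;> by_cases h2 : (k:ℕ) = m ∧ (j:ℕ) ≠ m <;>
        simp [h1, h2] <;> ring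
    rw [Finset.sum_congr rfl fun k _ => expand k, Finset.sum_add_distrib,
      Finset.sum_ite_eq' Finset.univ j (fun k => ent m i k)]
    simp only [Finset.mem_univ, if_pos]
    have hsecond : (∑ k : Fin N, if (k:ℕ) = m ∧ (j:ℕ) ≠ m then 2 * ent m i k else 0)
        = if (j:ℕ) ≠ m then 2 * ent m i m else 0 := by
      by_cases hj : (j:ℕ) = m
      · simp [hj]
      · rw [if_pos hj]
        have : ∀ k : Fin N, ((k:ℕ) = m ∧ (j:ℕ) ≠ m) ↔ k = (⟨m, hmN⟩ : Fin N) := by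
          intro k
          constructor
          · rintro ⟨h, -⟩; exact Fin.ext h
          · intro h; exact ⟨by simp [h], hj⟩
        rw [Finset.sum_congr rfl fun k _ => by rw [if_congr (this k) rfl rfl]]
        rw [Finset.sum_ite_eq' Finset.univ (⟨m, hmN⟩ : Fin N) (fun k => 2 * ent m i k)]
        simp
    rw [hsecond, ent_step]

lemma entdef (m i j : ℕ) : ent m i j =
  if i < m then
    2 * 3 ^ (m - 1 - i) -
      (if j = i then 1 else if i < j ∧ j < m then 4 * 3 ^ (j - i - 1) else 0)
  else if i = j then 1 else 0 := rfl

lemma geom_fin (N : ℕ) : ∑ i : Fin N, (3:ℝ) ^ (N - 1 - (i:ℕ)) = (3 ^ N - 1) / 2 := by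
  rw [Fin.sum_univ_eq_sum_range (fun k => (3:ℝ) ^ (N - 1 - k)) N,
    Finset.sum_range_reflect (fun k => (3:ℝ) ^ k) N, geom_sum_eq (by norm_num : (3:ℝ) ≠ 1)]
  norm_num

lemma ent_nonneg (m i j : ℕ) : 0 ≤ ent m i j := by
  rw [entdef]
  by_cases him : i < m
  · rw [if_pos him]
    have h0 : (1:ℝ) ≤ 3 ^ (m - 1 - i) := one_le_pow₀ (by norm_num : (1:ℝ) ≤ 3)
    by_cases hj : j = i
    · rw [if_pos hj]; nlinarith
    · rw [if_neg hj]
      by_cases hjm : i < j ∧ j < m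
      · rw [if_pos hjm]
        have he : m - 1 - i = (m - 2 - i) + 1 := by omega
        have hle : j - i - 1 ≤ m - 2 - i := by omega
        have : (3:ℝ) ^ (j - i - 1) ≤ 3 ^ (m - 2 - i) :=
          pow_le_pow_right₀ (by norm_num) hle
        rw [he, pow_succ]
        nlinarith [pow_pos (by norm_num : (0:ℝ) < 3) (m - 2 - i)]
      · rw [if_neg hjm, sub_zero]
        positivity
  · rw [if_neg him]
    by_cases h : i = j <;> simp [h]

lemma ent_le (m i j : ℕ) (him : i < m) :
    ent m i j ≤ 2 * 3 ^ (m - 1 - i) - (if j = i then 1 else 0) := by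
  rw [entdef, if_pos him]
  by_cases hj : j = i
  · simp [hj]
  · rw [if_neg hj, if_neg hj]
    by_cases hjm : i < j ∧ j < m
    · rw [if_pos hjm]
      have : (0:ℝ) ≤ 4 * 3 ^ (j - i - 1) := by positivity
      linarith
    · rw [if_neg hjm]

lemma trace_ent (N : ℕ) : ∑ i : Fin N, ent N i i = 3 ^ N - N - 1 := by
  have : ∀ i : Fin N, ent N i i = 2 * 3 ^ (N - 1 - (i:ℕ)) - 1 := by
    intro i
    rw [entdef, if_pos i.isLt, if_pos rfl]
  rw [Finset.sum_congr rfl fun i _ => this i, Finset.sum_sub_distrib, ← Finset.mul_sum,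
    geom_fin]
  simp [Finset.card_univ]
  ring

lemma colsum_ent (N : ℕ) (j : Fin N) : ∑ i : Fin N, |ent N i j| ≤ 3 ^ N - 2 := by
  have habs : ∀ i : Fin N, |ent N (i:ℕ) (j:ℕ)| = ent N i j := fun i => abs_of_nonneg (ent_nonneg _ _ _)
  rw [Finset.sum_congr rfl fun i _ => habs i]
  calc ∑ i : Fin N, ent N i j
      ≤ ∑ i : Fin N, (2 * 3 ^ (N - 1 - (i:ℕ)) - (if (j:ℕ) = (i:ℕ) then 1 else 0)) :=
        Finset.sum_le_sum fun i _ => ent_le N i j i.isLt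
    _ = (3 ^ N - 1) - 1 := by
        rw [Finset.sum_sub_distrib, ← Finset.mul_sum, geom_fin]
        have h1 : ∑ i : Fin N, (if (j:ℕ) = (i:ℕ) then (1:ℝ) else 0) = 1 := by
          simp [Fin.val_eq_val]
        rw [h1]
        ring
    _ = 3 ^ N - 2 := by ring

theorem stmt_14 (N : ℕ) (hN : 0 < N) :
    ((3 : ℝ) ^ N - N - 1) / N ≤ specRad (Hhat N) ∧ specRad (Hhat N) ≤ 3 ^ N - 2 := by
  set M := (Hhat N).map Complex.ofReal with hM
  have hent : ∀ i j : Fin N, Hhat N i j = ent N i j := key N N le_rfl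
  have hB0 : (0:ℝ) ≤ 3 ^ N - 2 := by
    have : (3:ℝ) ^ 1 ≤ 3 ^ N := pow_le_pow_right₀ (by norm_num) hN
    simpa using by linarith
  have hcol : ∀ j, ∑ i, ‖M i j‖ ≤ 3 ^ N - 2 := by
    intro j
    have : ∀ i : Fin N, ‖M i j‖ = |ent N i j| := by
      intro i
      simp [hM, Matrix.map_apply, Complex.norm_real, hent i j]
    rw [Finset.sum_congr rfl fun i _ => this i]
    exact colsum_ent N j
  have hbound : ∀ z ∈ spectrum ℂ M, ‖z‖ ≤ 3 ^ N - 2 :=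
    fun z hz => spectrum_abs_le M (3 ^ N - 2) hcol z hz
  set S : Set ℝ := (fun z => ‖z‖) '' spectrum ℂ M with hS
  have hSb : ∀ x ∈ S, x ≤ 3 ^ N - 2 := by
    rintro x ⟨z, hz, rfl⟩
    exact hbound z hz
  have hbdd : BddAbove S := ⟨3 ^ N - 2, fun x hx => hSb x hx⟩
  have hupper : specRad (Hhat N) ≤ 3 ^ N - 2 := Real.sSup_le hSb hB0
  refine ⟨?_, hupper⟩
  -- lower bound
  have htr0 : (0:ℝ) ≤ 3 ^ N - N - 1 := by
    have h1 : (N:ℕ) < 3 ^ N := Nat.lt_pow_self (by norm_num)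
    have h2 : ((N:ℝ)) + 1 ≤ 3 ^ N := by exact_mod_cast Nat.succ_le_of_lt h1
    linarith
  have htrace : M.trace = ((3 ^ N - N - 1 : ℝ) : ℂ) := by
    have : M.trace = ((∑ i : Fin N, ent N i i : ℝ) : ℂ) := by
      simp only [Matrix.trace, Matrix.diag, hM, Matrix.map_apply, Complex.ofReal_sum]
      exact Finset.sum_congr rfl fun i _ => by rw [hent i i]
    rw [this, trace_ent]
  set p := Matrix.charpoly M with hp
  have hcard : p.roots.card = N := by
    rw [(Polynomial.splits_iff_card_roots).mp (IsAlgClosed.splits p),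
      Matrix.charpoly_natDegree_eq_dim, Fintype.card_fin]
  have hsum : p.roots.sum = ((3 ^ N - N - 1 : ℝ) : ℂ) := by
    rw [← Matrix.trace_eq_sum_roots_charpoly, htrace]
  have hroot_le : ∀ x ∈ p.roots.map (fun z => ‖z‖), x ≤ specRad (Hhat N) := by
    intro x hx
    obtain ⟨z, hz, rfl⟩ := Multiset.mem_map.mp hx
    have hzs : z ∈ spectrum ℂ M :=
      (mem_spectrum_iff_root M z).mpr (Polynomial.isRoot_of_mem_roots hz)
    exact le_csSup hbdd ⟨z, hzs, rfl⟩
  have hsum_le : ((p.roots.map (fun z => ‖z‖)).sum : ℝ)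
      ≤ N * specRad (Hhat N) := by
    have := Multiset.sum_le_card_nsmul (p.roots.map (fun z => ‖z‖))
      (specRad (Hhat N)) hroot_le
    rwa [Multiset.card_map, hcard, nsmul_eq_mul] at this
  have hkey : (3:ℝ) ^ N - N - 1 ≤ N * specRad (Hhat N) := by
    have h1 : (3:ℝ) ^ N - N - 1 = ‖p.roots.sum‖ := by
      rw [hsum, Complex.norm_real, Real.norm_eq_abs, abs_of_nonneg htr0]
    have h2 : ‖p.roots.sum‖ ≤ (p.roots.map (fun z => ‖z‖)).sum := by
      exact norm_multiset_sum_le p.roots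
    linarith
  rw [div_le_iff₀ (by exact_mod_cast hN : (0:ℝ) < N)]
  linarith
end

section
/- Define the sorting map S: (ℤ⁺)^N → 𝒪_N sending a vector of positive integers to its entries sorted in non-increasing order, and for 1 ≤ j ≤ N define W_j on sorted vectors by a·W_j = (a·A^{(j)})·S, where A^{(j)} = I + S^{(j)} acts on row vectors from the right. Then for sorted positive vectors a, b: (i) a ≥ b implies a·W_j ≥ b·W_j; (ii) a > b (strict in every entry) implies a·W_j > b·W_j; (iii) if j < k and a_j = a_k then a·W_j = a·W_k; (iv) if j < k and a_j > a_k then a·W_j > a·W_k; (v) if j ≤ k and a > b then a·W_j > b·W_k. -/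
open Matrix BigOperators

/-- `Wmap N j a` is the sorted result of `a · A^(j)` for a sorted positive vector `a`
(0-indexed `j`): drop entry `j`, add `2·a j` to every other entry (keeping their order),
and append `a j` at the end. -/
def Wmap (N : ℕ) (j : Fin N) (a : Fin N → ℕ) : Fin N → ℕ := fun i =>
  if _h : (i : ℕ) < (j : ℕ) then a i + 2 * a j
  else if h2 : (i : ℕ) + 1 < N then a ⟨(i : ℕ) + 1, h2⟩ + 2 * a j
  else a j

theorem stmt_17 (N : ℕ) (hN : 0 < N)
    (a b : Fin N → ℕ)
    (ha : ∀ i, 0 < a i) (hb : ∀ i, 0 < b i)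
    (haSorted : ∀ i j : Fin N, i ≤ j → a j ≤ a i)
    (hbSorted : ∀ i j : Fin N, i ≤ j → b j ≤ b i) :
    (∀ j : Fin N, (∀ i, b i ≤ a i) → ∀ i, Wmap N j b i ≤ Wmap N j a i) ∧
    (∀ j : Fin N, (∀ i, b i < a i) → ∀ i, Wmap N j b i < Wmap N j a i) ∧
    (∀ j k : Fin N, j < k → a j = a k → Wmap N j a = Wmap N k a) ∧
    (∀ j k : Fin N, j < k → a k < a j → ∀ i, Wmap N k a i < Wmap N j a i) ∧
    (∀ j k : Fin N, j ≤ k → (∀ i, b i < a i) → ∀ i, Wmap N k b i < Wmap N j a i) := by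
  refine ⟨?_, ?_, ?_, ?_, ?_⟩
  · intro j hab i
    unfold Wmap
    split_ifs with h1 h2
    · have := hab i; have := hab j; omega
    · have := hab ⟨(i : ℕ) + 1, h2⟩; have := hab j; omega
    · exact hab j
  · intro j hab i
    unfold Wmap
    split_ifs with h1 h2
    · have := hab i; have := hab j; omega
    · have := hab ⟨(i : ℕ) + 1, h2⟩; have := hab j; omega
    · exact hab j
  · intro j k hjk heq
    have hjk' : (j : ℕ) < (k : ℕ) := hjk
    funext i
    unfold Wmap
    split_ifs with h1 h2 h3 h4 h5
    all_goals try (exfalso; omega)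
    all_goals try omega
    · have e1 : a i ≤ a j := haSorted j i (by omega)
      have e2 : a k ≤ a i := haSorted i k (by omega)
      have e3 : a ⟨(i : ℕ) + 1, h4⟩ ≤ a j :=
        haSorted j ⟨(i : ℕ) + 1, h4⟩ (by simp only [Fin.le_def]; omega)
      have e4 : a k ≤ a ⟨(i : ℕ) + 1, h4⟩ :=
        haSorted ⟨(i : ℕ) + 1, h4⟩ k (by simp only [Fin.le_def]; omega)
      omega
  · intro j k hjk hlt i
    have hjk' : (j : ℕ) < (k : ℕ) := hjk
    unfold Wmap
    split_ifs with h1 h2 h3 h4 h5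
    all_goals try (exfalso; omega)
    all_goals try omega
    · have e1 : a i ≤ a j := haSorted j i (by omega)
      have e4 : a k ≤ a ⟨(i : ℕ) + 1, h3⟩ :=
        haSorted ⟨(i : ℕ) + 1, h3⟩ k (by simp only [Fin.le_def]; omega)
      omega
  · intro j k hjk hab i
    have hjk' : (j : ℕ) ≤ (k : ℕ) := hjk
    have hj : b j < a j := hab j
    have hbk : b k ≤ b j := hbSorted j k hjk
    unfold Wmap
    split_ifs with h1 h2 h3 h4 h5
    all_goals try (exfalso; omega)
    · have := hab i; omega
    · have e1 : b i ≤ b j := hbSorted j i (by omega)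
      have e2 : b k ≤ b ⟨(i : ℕ) + 1, h3⟩ :=
        hbSorted ⟨(i : ℕ) + 1, h3⟩ k (by simp only [Fin.le_def]; omega)
      have e3 := hab ⟨(i : ℕ) + 1, h3⟩
      omega
    · have e1 := hab ⟨(i : ℕ) + 1, h4⟩
      omega
    · omega
end

section
/- Let a = (1,1,…,1) ∈ (ℤ⁺)^N, let A^{(k)} = I + S^{(k)} be as above, and let ℓ = (1,2,…,k) for some k ≤ N. Then sorting the vector a·A^{(1)}A^{(2)}⋯A^{(k)} in non-increasing order gives the same result as applying k times the map W₁ (defined by b·W₁ = sort(b·A^{(1)})) to a; i.e., the strategy (1,2,…,k) realizes the all-ones strategy after sorting. -/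
open Matrix BigOperators

/-- `AmatN N k` is the matrix `I + S^(k)` over ℕ (0-indexed `k`). -/
def AmatN (N : ℕ) (k : ℕ) : Matrix (Fin N) (Fin N) ℕ :=
  fun i j => (if i = j then 1 else 0) + (if (i : ℕ) = k ∧ (j : ℕ) ≠ k then 2 else 0)

def Vvec (N k : ℕ) : Fin N → ℕ := fun j =>
  if (j : ℕ) < k then 3 ^ k - 2 * 3 ^ (j : ℕ) else 3 ^ k

def Wvec (N k : ℕ) : Fin N → ℕ := fun i =>
  if (i : ℕ) + k < N then 3 ^ k else 3 ^ k - 2 * 3 ^ ((i : ℕ) + k - N)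

lemma two_mul_pow_le {j k : ℕ} (h : j < k) : 2 * 3 ^ j ≤ 3 ^ k := by
  calc 2 * 3 ^ j ≤ 3 * 3 ^ j := by nlinarith [pow_pos (by norm_num : 0 < 3) j]
    _ = 3 ^ (j + 1) := by ring
    _ ≤ 3 ^ k := Nat.pow_le_pow_right (by norm_num) h

lemma vecMul_prod (N k : ℕ) (hk : k ≤ N) :
    Matrix.vecMul (fun _ => 1) (((List.range k).map (AmatN N)).prod) = Vvec N k := by
  induction k with
  | zero =>
    funext m
    simp [Matrix.vecMul, dotProduct, Vvec, Matrix.one_apply]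
  | succ k ih =>
    have hkN : k < N := hk
    rw [List.range_succ, List.map_append, List.prod_append, List.map_singleton,
      List.prod_singleton, ← Matrix.vecMul_vecMul, ih (le_of_lt hkN)]
    funext m
    have kf : Fin N := ⟨k, hkN⟩
    show ∑ i, Vvec N k i * AmatN N k i m = Vvec N (k + 1) m
    have hsum : ∑ i, Vvec N k i * AmatN N k i m
        = (∑ i, if i = m then Vvec N k i else 0)
          + ∑ i, if i.val = k ∧ m.val ≠ k then Vvec N k i * 2 else 0 := by
      rw [← Finset.sum_add_distrib]
      congr 1; funext i
      simp [AmatN, mul_add, mul_ite]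
    rw [hsum, Finset.sum_ite_eq' Finset.univ m (Vvec N k)]
    simp only [Finset.mem_univ, if_true]
    by_cases hm : (m : ℕ) = k
    · have h2 : (∑ i, if i.val = k ∧ m.val ≠ k then Vvec N k i * 2 else 0) = 0 := by
        apply Finset.sum_eq_zero; intro i _; simp [hm]
      rw [h2]
      simp only [Vvec, hm]
      rw [if_neg (lt_irrefl k), if_pos (Nat.lt_succ_self k)]
      have h3 : (3:ℕ) ^ (k+1) = 3 * 3 ^ k := by ring
      omega
    · have h2 : (∑ i, if i.val = k ∧ m.val ≠ k then Vvec N k i * 2 else 0)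
          = Vvec N k ⟨k, hkN⟩ * 2 := by
        rw [Finset.sum_eq_single (⟨k, hkN⟩ : Fin N)]
        · simp [hm]
        · intro i _ hi
          have : (i : ℕ) ≠ k := fun h => hi (Fin.ext h)
          simp [this]
        · simp
      rw [h2]
      have hVk : Vvec N k ⟨k, hkN⟩ = 3 ^ k := by simp [Vvec]
      rw [hVk]
      simp only [Vvec]
      have h3 : (3:ℕ) ^ (k+1) = 3 * 3 ^ k := by ring
      by_cases hmk : (m : ℕ) < k
      · have hle : 2 * 3 ^ (m : ℕ) ≤ 3 ^ k := two_mul_pow_le hmk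
        rw [if_pos hmk, if_pos (Nat.lt_succ_of_lt hmk)]
        omega
      · have : ¬ (m : ℕ) < k + 1 := by omega
        rw [if_neg hmk, if_neg this]
        omega

lemma iterate_Wmap (N k : ℕ) (hN : 0 < N) (hk : k ≤ N) :
    (Wmap N ⟨0, hN⟩)^[k] (fun _ => 1) = Wvec N k := by
  induction k with
  | zero =>
    funext i
    simp [Wvec, i.isLt]
  | succ k ih =>
    have hkN : k < N := hk
    rw [Function.iterate_succ_apply', ih (le_of_lt hkN)]
    funext i
    show Wmap N ⟨0, hN⟩ (Wvec N k) i = Wvec N (k + 1) i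
    have h0 : Wvec N k ⟨0, hN⟩ = 3 ^ k := by
      have hz : ((⟨0, hN⟩ : Fin N) : ℕ) = 0 := rfl
      simp only [Wvec, hz]
      rw [if_pos (by omega)]
    rw [Wmap]
    rw [dif_neg (Nat.not_lt_zero (i : ℕ) : ¬ (i : ℕ) < ((⟨0, hN⟩ : Fin N) : ℕ))]
    have h3 : (3:ℕ) ^ (k+1) = 3 * 3 ^ k := by ring
    by_cases h2 : (i : ℕ) + 1 < N
    · rw [dif_pos h2, h0]
      simp only [Wvec]
      by_cases hc : (i : ℕ) + 1 + k < N
      · rw [if_pos hc, if_pos (by omega : (i:ℕ) + (k+1) < N)]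
        omega
      · rw [if_neg hc, if_neg (by omega : ¬ (i:ℕ) + (k+1) < N)]
        have he : (i : ℕ) + 1 + k - N = (i : ℕ) + (k + 1) - N := by omega
        rw [he]
        have hlt : (i : ℕ) + (k + 1) - N < k := by omega
        have hle : 2 * 3 ^ ((i : ℕ) + (k + 1) - N) ≤ 3 ^ k := two_mul_pow_le hlt
        omega
    · rw [dif_neg h2, h0]
      simp only [Wvec]
      rw [if_neg (by omega : ¬ (i:ℕ) + (k+1) < N)]
      have he : (i : ℕ) + (k + 1) - N = k := by omega
      rw [he]
      omega

theorem stmt_18 (N k : ℕ) (hN : 0 < N) (hk : k ≤ N) :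
    ∃ σ : Equiv.Perm (Fin N),
      (∀ i, Matrix.vecMul (fun _ => 1) (((List.range k).map (AmatN N)).prod) (σ i) =
          (Wmap N ⟨0, hN⟩)^[k] (fun _ => 1) i) ∧
      (∀ i j : Fin N, i ≤ j →
          (Wmap N ⟨0, hN⟩)^[k] (fun _ => 1) j ≤ (Wmap N ⟨0, hN⟩)^[k] (fun _ => 1) i) := by
  haveI : NeZero N := ⟨hN.ne'⟩
  refine ⟨Equiv.addLeft (Fin.ofNat N k), ?_, ?_⟩
  · intro i
    rw [vecMul_prod N k hk, iterate_Wmap N k hN hk]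
    have hval : ((Equiv.addLeft (Fin.ofNat N k) i : Fin N) : ℕ) = (k % N + (i : ℕ)) % N := by
      simp [Equiv.addLeft, Fin.add_def, Fin.val_natCast]
    by_cases hkn : k = N
    · have hv : ((Equiv.addLeft (Fin.ofNat N k) i : Fin N) : ℕ) = (i : ℕ) := by
        rw [hval, hkn, Nat.mod_self, Nat.zero_add, Nat.mod_eq_of_lt i.isLt]
      simp only [Vvec, Wvec, hv]
      rw [if_pos (by omega : (i:ℕ) < k), if_neg (by omega : ¬ (i:ℕ) + k < N)]
      have he : (i : ℕ) + k - N = (i : ℕ) := by omega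
      rw [he]
    · have hkN : k < N := lt_of_le_of_ne hk hkn
      have hkk : k % N = k := Nat.mod_eq_of_lt hkN
      by_cases hc : (i : ℕ) + k < N
      · have hv : ((Equiv.addLeft (Fin.ofNat N k) i : Fin N) : ℕ) = k + (i : ℕ) := by
          rw [hval, hkk, Nat.mod_eq_of_lt (by omega)]
        simp only [Vvec, Wvec, hv]
        rw [if_neg (by omega : ¬ k + (i:ℕ) < k), if_pos hc]
      · have hv : ((Equiv.addLeft (Fin.ofNat N k) i : Fin N) : ℕ) = k + (i : ℕ) - N := by
          rw [hval, hkk]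
          have : k + (i : ℕ) = (k + (i : ℕ) - N) + N := by omega
          rw [this, Nat.add_mod_right, Nat.mod_eq_of_lt (by omega)]
          omega
        simp only [Vvec, Wvec, hv]
        rw [if_pos (by omega : k + (i:ℕ) - N < k), if_neg hc]
        have he : k + (i : ℕ) - N = (i : ℕ) + k - N := by omega
        rw [he]
  · intro i j hij
    rw [iterate_Wmap N k hN hk]
    simp only [Wvec]
    have hij' : (i : ℕ) ≤ (j : ℕ) := hij
    by_cases hi : (i : ℕ) + k < N
    · rw [if_pos hi]
      by_cases hj : (j : ℕ) + k < N
      · rw [if_pos hj]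
      · rw [if_neg hj]
        exact Nat.sub_le _ _
    · rw [if_neg hi, if_neg (by omega : ¬ (j:ℕ) + k < N)]
      apply Nat.sub_le_sub_left
      apply Nat.mul_le_mul_left
      exact Nat.pow_le_pow_right (by norm_num) (by omega)
end
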